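/- Let q be an odd prime power, E the unique subgroup of 𝔽_{q²}^× of order q+1, Q its unique index-2 subgroup, R = E \ Q, and T' = {z ∈ 𝔽_{q²}^× \ E : z^{1−q} ∈ {1} ∪ R}. For every nontrivial group homomorphism λ: E → ℂ^×, one has ∑_{z ∈ T'} λ(z^{1−q}) = (q−3) − (q−1)·∑_{x ∈ Q} λ(x). -/

import Mathlib

open scoped Classical
open Finset

lemma aux_root_bound {K : Type} [Field K] [Fintype K] (m : ℕ) (hm : 0 < m) :
    (Finset.univ.filter fun z : Kˣ => z ^ m = 1).card ≤ m := by
  classical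
  calc (Finset.univ.filter fun z : Kˣ => z ^ m = 1).card
      ≤ Multiset.card (Polynomial.nthRoots m ((Units.coeHom K) 1)) := by
        have := card_nthRoots_subgroup_units (Units.coeHom K) (fun _ _ h => Units.ext h) hm 1
        convert this using 2
    _ ≤ m := by simpa using Polynomial.card_nthRoots m ((Units.coeHom K) 1)

lemma aux_mem_iff {K : Type} [Field K] [Fintype K] (H : Subgroup Kˣ) (m : ℕ) (hm : 0 < m)
    (hHm : Nat.card H = m) (x : Kˣ) : x ∈ H ↔ x ^ m = 1 := by
  classical
  have hsub : (Finset.univ.filter fun z : Kˣ => z ∈ H) ⊆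
      (Finset.univ.filter fun z : Kˣ => z ^ m = 1) := by
    intro z hz
    simp only [Finset.mem_filter, Finset.mem_univ, true_and] at hz ⊢
    have h1 : (⟨z, hz⟩ : H) ^ m = 1 := by rw [← hHm]; exact pow_card_eq_one'
    have := congrArg (Subtype.val) h1
    simpa using this
  have hcardH : (Finset.univ.filter fun z : Kˣ => z ∈ H).card = m := by
    rw [← Fintype.card_subtype, ← Nat.card_eq_fintype_card, hHm]
  have heq := Finset.eq_of_subset_of_card_le hsub (by rw [hcardH]; exact aux_root_bound m hm)
  constructor
  · intro hx
    have : x ∈ (Finset.univ.filter fun z : Kˣ => z ^ m = 1) := by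
      rw [← heq]; simp [hx]
    simpa using this
  · intro hx
    have : x ∈ (Finset.univ.filter fun z : Kˣ => z ∈ H) := by
      rw [heq]; simp [hx]
    simpa using this

theorem stmt_14 (q p n : ℕ) (hp : p.Prime) (hq : q = p ^ n) (hn : n ≠ 0) (hodd : Odd q)
    (K : Type) [Field K] [Fintype K] (hK : Fintype.card K = q ^ 2)
    (E Q : Subgroup Kˣ) (hE : Nat.card E = q + 1) (hQE : Q ≤ E)
    (hQ : Nat.card Q * 2 = q + 1)
    (nu : Kˣ → ↥E) (hnu : ∀ z : Kˣ, (nu z : Kˣ) = z * (z ^ q)⁻¹)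
    (lam : ↥E →* ℂˣ) (hlam : lam ≠ 1) :
    ∑ z ∈ Finset.univ.filter (fun z : Kˣ => z ∉ E ∧
        (z * (z ^ q)⁻¹ = 1 ∨ (z * (z ^ q)⁻¹ ∈ E ∧ z * (z ^ q)⁻¹ ∉ Q))),
      ((lam (nu z) : ℂˣ) : ℂ)
    = ((q : ℂ) - 3) - ((q : ℂ) - 1) *
        ∑ x : ↥Q, ((lam (Subgroup.inclusion hQE x) : ℂˣ) : ℂ) := by
  classical
  -- numerics
  have hq2 : 2 ≤ q := by rw [hq]; exact Nat.one_lt_pow hn hp.one_lt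
  have hq3 : 3 ≤ q := by obtain ⟨k, hk⟩ := hodd; omega
  have hcardKx : Fintype.card Kˣ = q ^ 2 - 1 := by rw [Fintype.card_units, hK]
  have hNcardKx : Nat.card Kˣ = q ^ 2 - 1 := by rw [Nat.card_eq_fintype_card, hcardKx]
  have hqq : (1:ℕ) ≤ q * q := Nat.one_le_iff_ne_zero.mpr (by positivity)
  have hfac : (q + 1) * (q - 1) = q ^ 2 - 1 := by
    cases' Nat.exists_eq_add_of_le hq2 with r hr
    subst hr
    have e1 : 2 + r - 1 = r + 1 := by omega
    have e2 : (2 + r) ^ 2 = r * r + 4 * r + 4 := by ring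
    have e3 : (2 + r + 1) * (r + 1) = r * r + 4 * r + 3 := by ring
    rw [e1, e2, e3]
    omega
  have hzcard : ∀ z : Kˣ, z ^ (q ^ 2 - 1) = 1 := fun z => by rw [← hcardKx]; exact pow_card_eq_one
  -- the homomorphism F z = z * (z^q)⁻¹
  let F : Kˣ →* Kˣ :=
    { toFun := fun z => z * (z ^ q)⁻¹
      map_one' := by simp
      map_mul' := by
        intro a b
        show a * b * ((a * b) ^ q)⁻¹ = a * (a ^ q)⁻¹ * (b * (b ^ q)⁻¹)
        rw [mul_pow, mul_inv]
        exact mul_mul_mul_comm a b (a ^ q)⁻¹ (b ^ q)⁻¹ }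
  have hFE : ∀ z : Kˣ, (z * (z ^ q)⁻¹) ^ (q + 1) = 1 := by
    intro z
    have h1 : q * (q + 1) = (q ^ 2 - 1) + (q + 1) := by
      rw [Nat.mul_add, mul_one, pow_two]; omega
    have h2 : (z ^ q) ^ (q + 1) = z ^ (q + 1) := by
      rw [← pow_mul, h1, pow_add, hzcard, one_mul]
    rw [mul_pow, inv_pow, h2, mul_inv_cancel]
  have hmemE : ∀ x : Kˣ, x ∈ E ↔ x ^ (q + 1) = 1 := aux_mem_iff E (q+1) (by omega) hE
  have hmemQ : ∀ x : Kˣ, x ∈ Q ↔ x ^ (Nat.card Q) = 1 :=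
    aux_mem_iff Q (Nat.card Q) (by omega) rfl
  have hfE : ∀ z : Kˣ, z * (z ^ q)⁻¹ ∈ E := fun z => (hmemE _).mpr (hFE z)
  -- kernel characterization
  have hker : ∀ z : Kˣ, z * (z ^ q)⁻¹ = 1 ↔ z ^ (q - 1) = 1 := by
    intro z
    have hzq : z ^ q = z ^ (q - 1) * z := by rw [← pow_succ]; congr 1; omega
    rw [mul_inv_eq_one, hzq, eq_comm, mul_eq_right]
  -- kernel cardinality
  have hkerE : (Finset.univ.filter fun z : Kˣ => z * (z ^ q)⁻¹ = 1)
      = (Finset.univ.filter fun z : Kˣ => z ^ (q - 1) = 1) := by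
    apply Finset.filter_congr
    intro z _
    simp [hker z]
  have hkerle : (Finset.univ.filter fun z : Kˣ => z * (z ^ q)⁻¹ = 1).card ≤ q - 1 := by
    rw [hkerE]; exact aux_root_bound (q-1) (by omega)
  have hkercard : Nat.card F.ker = (Finset.univ.filter fun z : Kˣ => z * (z ^ q)⁻¹ = 1).card := by
    rw [Nat.card_eq_fintype_card, Fintype.card_subtype]
    congr 1
    apply Finset.filter_congr
    intro z _
    simp [MonoidHom.mem_ker, F]
  have hsplit : Nat.card F.range * Nat.card F.ker = q ^ 2 - 1 := by
    rw [← hNcardKx, Subgroup.card_eq_card_quotient_mul_card_subgroup F.ker]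
    congr 1
    exact (Nat.card_congr (QuotientGroup.quotientKerEquivRange F).toEquiv).symm
  have hrangeC : F.range ≤ E := by rintro x ⟨z, rfl⟩; exact hfE z
  have hrangele : Nat.card F.range ≤ q + 1 := hE ▸ Subgroup.card_le_of_le hrangeC
  have hapos : 0 < Nat.card F.range := Nat.card_pos
  have hkeq : Nat.card F.ker = q - 1 := by
    by_contra hne
    have hblt : Nat.card F.ker < q - 1 := lt_of_le_of_ne (hkercard ▸ hkerle) hne
    have h1 : Nat.card F.range * Nat.card F.ker ≤ (q+1) * Nat.card F.ker :=
      Nat.mul_le_mul_right _ hrangele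
    have h2 : (q+1) * Nat.card F.ker < (q+1) * (q-1) :=
      Nat.mul_lt_mul_of_pos_left hblt (by omega)
    omega
  have hreq : Nat.card F.range = q + 1 := by
    have h := hsplit
    rw [hkeq, ← hfac] at h
    exact Nat.eq_of_mul_eq_mul_right (by omega) h
  have hrange_eq : F.range = E :=
    Subgroup.eq_of_le_of_card_ge hrangeC (by rw [hreq, hE])
  have hsurj : ∀ x : Kˣ, x ∈ E → ∃ z : Kˣ, z * (z ^ q)⁻¹ = x := by
    intro x hx
    rw [← hrange_eq] at hx
    exact hx
  have hker1 : (Finset.univ.filter fun z : Kˣ => z * (z ^ q)⁻¹ = 1).card = q - 1 := by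
    rw [← hkercard, hkeq]
  -- fiber cardinality
  have hfiber : ∀ x : Kˣ, x ∈ E →
      (Finset.univ.filter fun z : Kˣ => z * (z ^ q)⁻¹ = x).card = q - 1 := by
    intro x hx
    obtain ⟨z₀, hz₀⟩ := hsurj x hx
    have hxr : x ∈ Set.range F := ⟨z₀, hz₀⟩
    have hone : (1 : Kˣ) ∈ Set.range F := ⟨1, map_one F⟩
    have h2 := MonoidHom.card_fiber_eq_of_mem_range F hxr hone
    have h3 : (Finset.univ.filter fun z : Kˣ => z * (z ^ q)⁻¹ = x).card
        = (Finset.univ.filter fun z : Kˣ => z * (z ^ q)⁻¹ = 1).card := by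
      convert h2 using 2 <;> rfl
    rw [h3, hker1]
  -- z ∈ E implies f z = z^2 ∈ Q
  have hsqQ : ∀ z : Kˣ, z ∈ E → z * (z ^ q)⁻¹ ∈ Q := by
    intro z hz
    have h1 : z ^ (q + 1) = 1 := (hmemE z).mp hz
    have h2 : z ^ q * z = 1 := by rw [← pow_succ]; exact h1
    have h3 : (z ^ q)⁻¹ = z := inv_eq_of_mul_eq_one_right h2
    rw [h3, hmemQ, ← pow_two, ← pow_mul, show 2 * Nat.card Q = q + 1 by omega]
    exact h1
  -- 1 ≠ -1
  have hneg1 : (1 : Kˣ) ≠ -1 := by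
    intro h
    have h2 : ((2 : ℕ) : K) = 0 := by
      have := congrArg (Units.val) h
      simp only [Units.val_one, Units.val_neg] at this
      push_cast
      linear_combination this
    have hdvd : ringChar K ∣ 2 := (CharP.cast_eq_zero_iff K (ringChar K) 2).mp h2
    have hcp : (ringChar K).Prime := CharP.char_is_prime K (ringChar K)
    have hc2 : ringChar K = 2 := (Nat.prime_dvd_prime_iff_eq hcp Nat.prime_two).mp hdvd
    haveI : CharP K 2 := hc2 ▸ ringChar.charP K
    obtain ⟨n', hn'⟩ := FiniteField.card K 2
    obtain ⟨k, hk⟩ : Odd (q ^ 2) := hodd.pow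
    rw [hK] at hn'
    have h5 : (2 : ℕ) ∣ q ^ 2 :=
      hn'.2 ▸ dvd_pow_self 2 (Nat.pos_iff_ne_zero.mp n'.pos)
    obtain ⟨c, hc⟩ := h5
    omega
  -- the set decomposition
  have h1Q : (1 : Kˣ) ∈ Q := Q.one_mem
  have hSeq : (Finset.univ.filter (fun z : Kˣ => z ∉ E ∧
        (z * (z ^ q)⁻¹ = 1 ∨ (z * (z ^ q)⁻¹ ∈ E ∧ z * (z ^ q)⁻¹ ∉ Q))))
      = (Finset.univ.filter (fun z : Kˣ => z ∉ E ∧ z * (z ^ q)⁻¹ = 1))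
        ∪ (Finset.univ.filter (fun z : Kˣ => z * (z ^ q)⁻¹ ∉ Q)) := by
    ext z
    simp only [Finset.mem_union, Finset.mem_filter, Finset.mem_univ, true_and]
    constructor
    · rintro ⟨hzE, h | h⟩
      · exact Or.inl ⟨hzE, h⟩
      · exact Or.inr h.2
    · rintro (⟨hzE, h⟩ | h)
      · exact ⟨hzE, Or.inl h⟩
      · exact ⟨fun hzE => h (hsqQ z hzE), Or.inr ⟨hfE z, h⟩⟩
  have hdisj : Disjoint (Finset.univ.filter (fun z : Kˣ => z ∉ E ∧ z * (z ^ q)⁻¹ = 1))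
      (Finset.univ.filter (fun z : Kˣ => z * (z ^ q)⁻¹ ∉ Q)) := by
    rw [Finset.disjoint_left]
    intro z h1 h2
    simp only [Finset.mem_filter, Finset.mem_univ, true_and] at h1 h2
    exact h2 (h1.2 ▸ h1Q)
  rw [hSeq, Finset.sum_union hdisj]
  -- sum over S₁
  have hsum1 : ∑ z ∈ Finset.univ.filter (fun z : Kˣ => z ∉ E ∧ z * (z ^ q)⁻¹ = 1),
      ((lam (nu z) : ℂˣ) : ℂ) = ((q : ℂ) - 3) := by
    have hone : ∀ z ∈ Finset.univ.filter (fun z : Kˣ => z ∉ E ∧ z * (z ^ q)⁻¹ = 1),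
        ((lam (nu z) : ℂˣ) : ℂ) = 1 := by
      intro z hz
      simp only [Finset.mem_filter, Finset.mem_univ, true_and] at hz
      have hnu1 : nu z = 1 := by
        apply Subtype.ext
        rw [hnu z, hz.2]
        rfl
      rw [hnu1, map_one, Units.val_one]
    rw [Finset.sum_congr rfl hone, Finset.sum_const, nsmul_eq_mul, mul_one]
    -- compute the cardinality
    have hsplitA : (Finset.univ.filter fun z : Kˣ => z * (z ^ q)⁻¹ = 1)
        = (Finset.univ.filter (fun z : Kˣ => z ∉ E ∧ z * (z ^ q)⁻¹ = 1))
          ∪ (Finset.univ.filter (fun z : Kˣ => z ∈ E ∧ z * (z ^ q)⁻¹ = 1)) := by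
      ext z
      simp only [Finset.mem_union, Finset.mem_filter, Finset.mem_univ, true_and]
      tauto
    have hdisj2 : Disjoint (Finset.univ.filter (fun z : Kˣ => z ∉ E ∧ z * (z ^ q)⁻¹ = 1))
        (Finset.univ.filter (fun z : Kˣ => z ∈ E ∧ z * (z ^ q)⁻¹ = 1)) := by
      rw [Finset.disjoint_left]
      intro z h1 h2
      simp only [Finset.mem_filter, Finset.mem_univ, true_and] at h1 h2
      exact h1.1 h2.1
    have hEA : (Finset.univ.filter (fun z : Kˣ => z ∈ E ∧ z * (z ^ q)⁻¹ = 1))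
        = {1, -1} := by
      ext z
      simp only [Finset.mem_filter, Finset.mem_univ, true_and, Finset.mem_insert,
        Finset.mem_singleton]
      constructor
      · rintro ⟨hzE, hz1⟩
        have h1 : z ^ (q-1) = 1 := (hker z).mp hz1
        have h2 : z ^ (q+1) = 1 := (hmemE z).mp hzE
        have h3 : z ^ 2 = 1 := by
          have h4 : z ^ (q+1) = z ^ (q-1) * z ^ 2 := by rw [← pow_add]; congr 1; omega
          rw [h4, h1, one_mul] at h2
          exact h2
        have h4 : (z : K) ^ 2 = 1 := by
          have := congrArg (Units.val) h3
          simpa using this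
        rcases sq_eq_one_iff.mp h4 with h | h
        · left; exact Units.ext (by simpa using h)
        · right; exact Units.ext (by simpa using h)
      · rintro (rfl | rfl)
        · exact ⟨E.one_mem, by simp⟩
        · constructor
          · rw [hmemE]
            exact Even.neg_one_pow (by simpa using hodd.add_one)
          · rw [hodd.neg_one_pow]
            simp
      -- end hEA
    have hcard2 : ({1, -1} : Finset Kˣ).card = 2 := Finset.card_pair hneg1
    have hcards := congrArg Finset.card hsplitA
    rw [Finset.card_union_of_disjoint hdisj2, hker1, hEA, hcard2] at hcards
    have hScard : (Finset.univ.filter (fun z : Kˣ => z ∉ E ∧ z * (z ^ q)⁻¹ = 1)).card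
        = q - 3 := by omega
    rw [hScard, Nat.cast_sub hq3]
    norm_num
  rw [hsum1]
  -- the character sum over E vanishes
  have hlam' : ((Units.coeHom ℂ).comp lam : ↥E →* ℂ) ≠ 1 := by
    intro h
    apply hlam
    ext e
    have h2 : ((Units.coeHom ℂ).comp lam) e = 1 := by rw [h]; rfl
    simpa using h2
  have hsumE : ∑ e : ↥E, ((lam e : ℂˣ) : ℂ) = 0 := by
    have := sum_hom_units_eq_zero ((Units.coeHom ℂ).comp lam) hlam'
    simpa using this
  have hQsum : ∑ e ∈ Finset.univ.filter (fun e : ↥E => (e : Kˣ) ∈ Q), ((lam e : ℂˣ) : ℂ)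
      = ∑ x : ↥Q, ((lam (Subgroup.inclusion hQE x) : ℂˣ) : ℂ) := by
    rw [eq_comm]
    refine Finset.sum_bij (fun (x : ↥Q) _ => Subgroup.inclusion hQE x) ?_ ?_ ?_ ?_
    · intro x _
      simp only [Finset.mem_filter, Finset.mem_univ, true_and]
      exact x.2
    · intro a _ b _ h
      have := congrArg (fun (e : ↥E) => (e : Kˣ)) h
      exact Subtype.ext this
    · intro e he
      simp only [Finset.mem_filter, Finset.mem_univ, true_and] at he
      exact ⟨⟨(e : Kˣ), he⟩, Finset.mem_univ _, rfl⟩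
    · intro x _
      rfl
  have hnotQ : ∑ e ∈ Finset.univ.filter (fun e : ↥E => (e : Kˣ) ∉ Q), ((lam e : ℂˣ) : ℂ)
      = - ∑ x : ↥Q, ((lam (Subgroup.inclusion hQE x) : ℂˣ) : ℂ) := by
    have h := Finset.sum_filter_add_sum_filter_not Finset.univ (fun e : ↥E => (e : Kˣ) ∈ Q)
      (fun e => ((lam e : ℂˣ) : ℂ))
    rw [hsumE, hQsum] at h
    linear_combination h
  -- image of S₂ under nu
  have hT : (Finset.univ.filter (fun z : Kˣ => z * (z ^ q)⁻¹ ∉ Q)).image nu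
      = Finset.univ.filter (fun e : ↥E => (e : Kˣ) ∉ Q) := by
    ext e
    simp only [Finset.mem_image, Finset.mem_filter, Finset.mem_univ, true_and]
    constructor
    · rintro ⟨z, hz, rfl⟩
      rw [hnu z]
      exact hz
    · intro he
      obtain ⟨z, hz⟩ := hsurj (e : Kˣ) e.2
      refine ⟨z, ?_, ?_⟩
      · rw [hz]; exact he
      · exact Subtype.ext (by rw [hnu z]; exact hz)
  have hsum2 : ∑ z ∈ Finset.univ.filter (fun z : Kˣ => z * (z ^ q)⁻¹ ∉ Q),
        ((lam (nu z) : ℂˣ) : ℂ)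
      = ((q:ℂ) - 1) *
        ∑ e ∈ Finset.univ.filter (fun e : ↥E => (e : Kˣ) ∉ Q), ((lam e : ℂˣ) : ℂ) := by
    rw [Finset.sum_comp (fun e : ↥E => ((lam e : ℂˣ) : ℂ)) nu, hT, Finset.mul_sum]
    apply Finset.sum_congr rfl
    intro e he
    simp only [Finset.mem_filter, Finset.mem_univ, true_and] at he
    have hfib : ((Finset.univ.filter (fun z : Kˣ => z * (z ^ q)⁻¹ ∉ Q)).filter
        (fun z => nu z = e)).card = q - 1 := by
      have heq2 : (Finset.univ.filter (fun z : Kˣ => z * (z ^ q)⁻¹ ∉ Q)).filter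
          (fun z => nu z = e) = Finset.univ.filter (fun z : Kˣ => z * (z ^ q)⁻¹ = (e : Kˣ)) := by
        ext z
        simp only [Finset.mem_filter, Finset.mem_univ, true_and]
        constructor
        · rintro ⟨_, rfl⟩
          exact (hnu z).symm
        · intro hz
          exact ⟨by rw [hz]; exact he, Subtype.ext (by rw [hnu z]; exact hz)⟩
      rw [heq2]
      exact hfiber (e : Kˣ) e.2
    rw [hfib, nsmul_eq_mul, Nat.cast_sub (by omega : 1 ≤ q), Nat.cast_one]
  rw [hsum2, hnotQ]
  ring
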